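/- Let Γ be a signed graph of order m and let Γ' = Γ − e be the signed graph obtained from Γ by deleting an edge e whose sign is negative. If (α_1, α_2, …, α_m) and (β_1, β_2, …, β_m) are the ordered net-Laplacian spectra of Γ and Γ' respectively, then α_p ≤ β_p ≤ α_{p+1} for every p = 1, 2, …, m, with the convention that α_{m+1} = m. -/

import Mathlib

open Polynomial

/-- A signed adjacency matrix: symmetric, zero diagonal, entries in {-1,0,1}. -/
def IsSignedAdj {n : ℕ} (A : Matrix (Fin n) (Fin n) ℝ) : Prop :=
  A.IsSymm ∧ (∀ i, A i i = 0) ∧ ∀ i j, A i j = -1 ∨ A i j = 0 ∨ A i j = 1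

/-- Degree of vertex `i`: number of neighbours. -/
noncomputable def deg {n : ℕ} (A : Matrix (Fin n) (Fin n) ℝ) (i : Fin n) : ℕ :=
  {j | A i j ≠ 0}.ncard

/-- Negative degree of vertex `i`. -/
noncomputable def negDeg {n : ℕ} (A : Matrix (Fin n) (Fin n) ℝ) (i : Fin n) : ℕ :=
  {j | A i j = -1}.ncard

/-- Positive degree of vertex `i`. -/
noncomputable def posDeg {n : ℕ} (A : Matrix (Fin n) (Fin n) ℝ) (i : Fin n) : ℕ :=
  {j | A i j = 1}.ncard

/-- Laplacian matrix `L = D - A`. -/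
noncomputable def lap {n : ℕ} (A : Matrix (Fin n) (Fin n) ℝ) : Matrix (Fin n) (Fin n) ℝ :=
  Matrix.diagonal (fun i => (deg A i : ℝ)) - A

/-- Net-Laplacian matrix `N = D± - A`, where `D±` is the diagonal of signed degrees. -/
noncomputable def netLap {n : ℕ} (A : Matrix (Fin n) (Fin n) ℝ) : Matrix (Fin n) (Fin n) ℝ :=
  Matrix.diagonal (fun i => ∑ j, A i j) - A

/-- Normalized net-Laplacian `D^{-1/2} N D^{-1/2}`. -/
noncomputable def normNetLap {n : ℕ} (A : Matrix (Fin n) (Fin n) ℝ) :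
    Matrix (Fin n) (Fin n) ℝ :=
  Matrix.diagonal (fun i => (Real.sqrt (deg A i))⁻¹) * netLap A *
    Matrix.diagonal (fun i => (Real.sqrt (deg A i))⁻¹)

/-- `μ` is the ordered (non-decreasing) spectrum of `M` : it is monotone and lists the
eigenvalues of `M` with multiplicity, i.e. the characteristic polynomial splits as
`∏ (X - μ i)`. -/
def IsOrderedSpectrum {n : ℕ} (M : Matrix (Fin n) (Fin n) ℝ) (μ : Fin n → ℝ) : Prop :=
  Monotone μ ∧ M.charpoly = ∏ i, (X - C (μ i))

/-- Deleting the edge `uv`: set the `(u,v)` and `(v,u)` entries to `0`. -/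
def deleteEdge {n : ℕ} (A : Matrix (Fin n) (Fin n) ℝ) (u v : Fin n) :
    Matrix (Fin n) (Fin n) ℝ :=
  Matrix.of fun i j => if (i = u ∧ j = v) ∨ (i = v ∧ j = u) then 0 else A i j

/-- Deleting the vertex `v`: principal submatrix omitting row/column `v`. -/
def deleteVertex {n : ℕ} (A : Matrix (Fin (n+1)) (Fin (n+1)) ℝ) (v : Fin (n+1)) :
    Matrix (Fin n) (Fin n) ℝ :=
  A.submatrix v.succAbove v.succAbove


/-! ### Auxiliary lemmas -/

section Aux

open Finset Matrix

theorem sg_charpoly_diag {n : ℕ} (d : Fin n → ℝ) :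
    (Matrix.diagonal d).charpoly = ∏ i, (X - C (d i)) := by
  unfold Matrix.charpoly
  have h : Matrix.charmatrix (Matrix.diagonal d)
      = Matrix.diagonal (fun i => (X : ℝ[X]) - C (d i)) := by
    ext i j
    by_cases h : i = j
    · subst h; simp [Matrix.charmatrix_apply_eq]
    · simp [Matrix.charmatrix_apply_ne _ _ _ h, Matrix.diagonal_apply_ne _ h]
  rw [h, Matrix.det_diagonal]

theorem sg_charpoly_conj {n : ℕ} (U D V : Matrix (Fin n) (Fin n) ℝ) (h1 : U * V = 1) :
    (U * D * V).charpoly = D.charpoly := by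
  unfold Matrix.charpoly
  have hc : Matrix.charmatrix (U * D * V) = U.map C * Matrix.charmatrix D * V.map C := by
    unfold Matrix.charmatrix
    have hmap : (U * D * V).map (C : ℝ →+* ℝ[X]) = U.map C * D.map C * V.map C := by
      simp [Matrix.map_mul]
    rw [RingHom.mapMatrix_apply, hmap]
    have hcomm := Matrix.scalar_commute (n := Fin n) (X : ℝ[X]) (fun r' => Commute.all _ _)
      (U.map C)
    rw [mul_sub, sub_mul]
    have e1 : U.map (C : ℝ →+* ℝ[X]) * (Matrix.scalar (Fin n)) (X : ℝ[X]) * V.map C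
        = (Matrix.scalar (Fin n)) (X : ℝ[X]) := by
      rw [← hcomm, mul_assoc, ← Matrix.map_mul, h1]
      simp [Matrix.scalar]
    rw [e1, RingHom.mapMatrix_apply]
  rw [hc, Matrix.det_mul, Matrix.det_mul]
  have hdet : (U.map (C : ℝ →+* ℝ[X])).det * (V.map (C : ℝ →+* ℝ[X])).det = 1 := by
    rw [← Matrix.det_mul, ← Matrix.map_mul, h1]
    simp
  linear_combination (Matrix.charmatrix D).det * hdet

theorem sg_herm_charpoly {m : ℕ} {M : Matrix (Fin m) (Fin m) ℝ} (hM : M.IsHermitian) :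
    M.charpoly = ∏ i, (X - C (hM.eigenvalues i)) := by
  have hs := hM.spectral_theorem
  rw [RCLike.ofReal_real_eq_id] at hs
  have h1 : (hM.eigenvectorUnitary : Matrix (Fin m) (Fin m) ℝ) *
      (star (hM.eigenvectorUnitary : Matrix (Fin m) (Fin m) ℝ)) = 1 :=
    (Matrix.mem_unitaryGroup_iff).mp hM.eigenvectorUnitary.2
  calc M.charpoly = ((hM.eigenvectorUnitary : Matrix (Fin m) (Fin m) ℝ) *
        Matrix.diagonal hM.eigenvalues *
        (star (hM.eigenvectorUnitary : Matrix (Fin m) (Fin m) ℝ))).charpoly := by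
        exact congrArg _ hs
    _ = (Matrix.diagonal hM.eigenvalues).charpoly := sg_charpoly_conj _ _ _ h1
    _ = ∏ i, (X - C (hM.eigenvalues i)) := sg_charpoly_diag _

theorem sg_monotone_eq_of_prod_eq {m : ℕ} {f g : Fin m → ℝ}
    (hf : Monotone f) (hg : Monotone g)
    (h : (∏ i, (X - C (f i)) : ℝ[X]) = ∏ i, (X - C (g i))) : f = g := by
  have hroots : Multiset.map f Finset.univ.val = Multiset.map g Finset.univ.val := by
    have hf' : (∏ i, (X - C (f i)) : ℝ[X]).roots = Multiset.map f Finset.univ.val := by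
      rw [show (∏ i, (X - C (f i)) : ℝ[X]) =
        ((Multiset.map f Finset.univ.val).map (fun a => X - C a)).prod by
          rw [Multiset.map_map]; rfl]
      exact roots_multiset_prod_X_sub_C _
    have hg' : (∏ i, (X - C (g i)) : ℝ[X]).roots = Multiset.map g Finset.univ.val := by
      rw [show (∏ i, (X - C (g i)) : ℝ[X]) =
        ((Multiset.map g Finset.univ.val).map (fun a => X - C a)).prod by
          rw [Multiset.map_map]; rfl]
      exact roots_multiset_prod_X_sub_C _
    rw [← hf', ← hg', h]
  have hperm : (List.ofFn f).Perm (List.ofFn g) := by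
    rw [← Multiset.coe_eq_coe]
    simpa [Finset.univ, Fintype.elems, List.ofFn_eq_map, Fin.fintype] using hroots
  exact List.ofFn_injective (List.Perm.eq_of_sortedLE hf.sortedLE_ofFn hg.sortedLE_ofFn hperm)

theorem sg_exists_orthonormal_eigen {m : ℕ} {M : Matrix (Fin m) (Fin m) ℝ}
    (hM : M.IsHermitian) {α : Fin m → ℝ} (hmono : Monotone α)
    (hchar : M.charpoly = ∏ i, (X - C (α i))) :
    ∃ w : Fin m → (Fin m → ℝ),
      (∀ i j, w i ⬝ᵥ w j = if i = j then (1:ℝ) else 0) ∧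
      (∀ i, M *ᵥ w i = α i • w i) := by
  classical
  set ε := hM.eigenvalues with hε
  set σ := Tuple.sort ε with hσ
  have hmono2 : Monotone (ε ∘ σ) := Tuple.monotone_sort ε
  have hprod : (∏ i, (X - C (α i)) : ℝ[X]) = ∏ i, (X - C ((ε ∘ σ) i)) := by
    rw [← hchar, sg_herm_charpoly hM]
    exact (Equiv.prod_comp σ (fun i => X - C (ε i))).symm
  have hαε : α = ε ∘ σ := sg_monotone_eq_of_prod_eq hmono hmono2 hprod
  refine ⟨fun i => ⇑(hM.eigenvectorBasis (σ i)), ?_, ?_⟩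
  · intro i j
    have h0 := orthonormal_iff_ite.mp hM.eigenvectorBasis.orthonormal (σ i) (σ j)
    have hinner : (inner ℝ (hM.eigenvectorBasis (σ i)) (hM.eigenvectorBasis (σ j)) : ℝ)
        = (⇑(hM.eigenvectorBasis (σ i)) : Fin m → ℝ) ⬝ᵥ ⇑(hM.eigenvectorBasis (σ j)) := by
      rw [PiLp.inner_apply]
      simp [dotProduct, mul_comm]
    rw [← hinner, h0]
    simp [Equiv.injective σ |>.eq_iff]
  · intro i
    rw [hαε]
    exact hM.mulVec_eigenvectorBasis (σ i)

theorem sg_sum_smul_dot {m : ℕ} (w : Fin m → (Fin m → ℝ)) (g : Fin m → ℝ) (z : Fin m → ℝ) :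
    (∑ i, g i • w i) ⬝ᵥ z = ∑ i, g i * (w i ⬝ᵥ z) := by
  simp only [dotProduct, Finset.sum_apply, Pi.smul_apply, smul_eq_mul,
    Finset.sum_mul, Finset.mul_sum]
  rw [Finset.sum_comm]
  apply Finset.sum_congr rfl; intros; apply Finset.sum_congr rfl; intros; ring

theorem sg_dot_sum_smul {m : ℕ} (w : Fin m → (Fin m → ℝ)) (z : Fin m → ℝ) (g : Fin m → ℝ) :
    z ⬝ᵥ (∑ i, g i • w i) = ∑ i, g i * (z ⬝ᵥ w i) := by
  rw [dotProduct_comm, sg_sum_smul_dot]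
  simp only [dotProduct_comm]

theorem sg_w_dot_sum {m : ℕ} (w : Fin m → (Fin m → ℝ))
    (hw : ∀ i j, w i ⬝ᵥ w j = if i = j then (1:ℝ) else 0) (g : Fin m → ℝ) (j : Fin m) :
    w j ⬝ᵥ (∑ i, g i • w i) = g j := by
  rw [sg_dot_sum_smul]
  simp only [hw, mul_ite, mul_one, mul_zero]
  rw [Finset.sum_ite_eq Finset.univ j (fun i => g i)]
  simp

theorem sg_sum_dot_sum {m : ℕ} (w : Fin m → (Fin m → ℝ))
    (hw : ∀ i j, w i ⬝ᵥ w j = if i = j then (1:ℝ) else 0) (g g' : Fin m → ℝ) :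
    (∑ i, g i • w i) ⬝ᵥ (∑ i, g' i • w i) = ∑ i, g i * g' i := by
  rw [sg_sum_smul_dot]
  have h1 : ∀ i, g i * (w i ⬝ᵥ ∑ j, g' j • w j) = g i * g' i := by
    intro i
    rw [sg_w_dot_sum w hw]
  simp only [h1]

theorem sg_w_li {m : ℕ} (w : Fin m → (Fin m → ℝ))
    (hw : ∀ i j, w i ⬝ᵥ w j = if i = j then (1:ℝ) else 0) : LinearIndependent ℝ w := by
  rw [Fintype.linearIndependent_iff]
  intro g hg j
  have h2 : w j ⬝ᵥ (∑ i, g i • w i) = g j := sg_w_dot_sum w hw g j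
  rw [hg] at h2
  simpa [dotProduct] using h2.symm

theorem sg_ortho_expand {m : ℕ} (w : Fin m → (Fin m → ℝ))
    (hw : ∀ i j, w i ⬝ᵥ w j = if i = j then (1:ℝ) else 0) (y : Fin m → ℝ) :
    ∃ d : Fin m → ℝ, y = ∑ i, d i • w i := by
  have hsp : Submodule.span ℝ (Set.range w) = ⊤ :=
    (sg_w_li w hw).span_eq_top_of_card_eq_finrank' (by simp)
  have hy : y ∈ Submodule.span ℝ (Set.range w) := hsp ▸ Submodule.mem_top
  obtain ⟨c, hc⟩ := (Finsupp.mem_span_range_iff_exists_finsupp).mp hy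
  refine ⟨c, ?_⟩
  rw [← hc, Finsupp.sum_fintype]
  simp

theorem sg_rayleigh_eq {m : ℕ} (w : Fin m → (Fin m → ℝ))
    (hw : ∀ i j, w i ⬝ᵥ w j = if i = j then (1:ℝ) else 0)
    {M : Matrix (Fin m) (Fin m) ℝ} {lam : Fin m → ℝ}
    (heig : ∀ i, M *ᵥ w i = lam i • w i) (g : Fin m → ℝ) :
    (∑ i, g i • w i) ⬝ᵥ (M *ᵥ (∑ i, g i • w i)) = ∑ i, lam i * (g i * g i) := by
  have hmv : M *ᵥ (∑ i, g i • w i) = ∑ i, (g i * lam i) • w i := by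
    have h1 : M *ᵥ (∑ i, g i • w i) = ∑ i, g i • (M *ᵥ w i) := by
      rw [← Matrix.mulVecLin_apply, map_sum]
      simp only [_root_.map_smul, Matrix.mulVecLin_apply]
    rw [h1]
    apply Finset.sum_congr rfl; intro i _
    rw [heig i, smul_smul, mul_comm]
  rw [hmv, sg_sum_dot_sum w hw]
  apply Finset.sum_congr rfl; intros; ring

theorem sg_exists_test {m k r : ℕ} (hk : k ≤ m) (hr : r < k)
    (w : Fin m → (Fin m → ℝ)) (c : Fin r → (Fin m → ℝ)) :
    ∃ g : Fin m → ℝ, (∀ i : Fin m, k ≤ (i : ℕ) → g i = 0) ∧ (∃ i, g i ≠ 0) ∧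
      (∀ j, c j ⬝ᵥ (∑ i, g i • w i) = 0) := by
  classical
  set φ : (Fin k → ℝ) →ₗ[ℝ] (Fin r → ℝ) :=
    { toFun := fun h => fun j => c j ⬝ᵥ (∑ i : Fin m,
        (if hi : (i : ℕ) < k then h ⟨i, hi⟩ else 0) • w i)
      map_add' := by
        intro a b
        funext j
        simp only [Pi.add_apply]
        rw [← dotProduct_add]
        congr 1
        rw [← Finset.sum_add_distrib]
        apply Finset.sum_congr rfl; intro i _
        by_cases hi : (i : ℕ) < k <;> simp [hi, add_smul]
      map_smul' := by
        intro a b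
        funext j
        simp only [RingHom.id_apply, Pi.smul_apply, smul_eq_mul]
        rw [← smul_eq_mul, ← dotProduct_smul]
        congr 1
        rw [Finset.smul_sum]
        apply Finset.sum_congr rfl; intro i _
        by_cases hi : (i : ℕ) < k <;> simp [hi, smul_smul] } with hφ
  have hninj : ¬ Function.Injective φ := by
    intro hinj
    have := LinearMap.finrank_le_finrank_of_injective hinj
    simp only [Module.finrank_fintype_fun_eq_card, Fintype.card_fin] at this
    omega
  rw [Function.not_injective_iff] at hninj
  obtain ⟨a, b, hab, hne⟩ := hninj
  refine ⟨fun i => if hi : (i : ℕ) < k then (a - b) ⟨i, hi⟩ else 0, ?_, ?_, ?_⟩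
  · intro i hi
    exact dif_neg (not_lt.mpr hi)
  · obtain ⟨t, ht⟩ : ∃ t, (a - b) t ≠ 0 := by
      by_contra h
      push_neg at h
      apply hne
      funext t
      have := h t
      simpa [sub_eq_zero] using this
    refine ⟨⟨(t : ℕ), lt_of_lt_of_le t.2 hk⟩, ?_⟩
    simpa [t.2, Fin.eta] using ht
  · intro j
    have h0 : φ (a - b) = 0 := by rw [map_sub, hab, sub_self]
    have h2 := congrFun h0 j
    simpa [hφ, sub_eq_zero] using h2

theorem deleteEdge_isSignedAdj {n : ℕ} {A : Matrix (Fin n) (Fin n) ℝ} (hA : IsSignedAdj A)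
    (u v : Fin n) : IsSignedAdj (deleteEdge A u v) := by
  obtain ⟨hsym, hdiag, hent⟩ := hA
  refine ⟨?_, ?_, ?_⟩
  · ext i j
    simp only [deleteEdge, Matrix.transpose_apply, Matrix.of_apply]
    by_cases h : (j = u ∧ i = v) ∨ (j = v ∧ i = u)
    · rw [if_pos h, if_pos (by tauto)]
    · rw [if_neg h, if_neg (by tauto)]
      exact hsym.apply i j
  · intro i
    simp only [deleteEdge, Matrix.of_apply]
    split
    · rfl
    · exact hdiag i
  · intro i j
    simp only [deleteEdge, Matrix.of_apply]
    split
    · exact Or.inr (Or.inl rfl)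
    · exact hent i j

theorem netLap_isHermitian {n : ℕ} {A : Matrix (Fin n) (Fin n) ℝ} (hA : A.IsSymm) :
    (netLap A).IsHermitian := by
  unfold Matrix.IsHermitian
  ext i j
  simp only [Matrix.conjTranspose_apply, star_trivial, netLap, Matrix.sub_apply]
  rw [hA.apply i j]
  congr 1
  by_cases h : i = j
  · rw [h]
  · rw [Matrix.diagonal_apply_ne _ h, Matrix.diagonal_apply_ne _ (Ne.symm h)]

theorem netLap_deleteEdge {n : ℕ} {A : Matrix (Fin n) (Fin n) ℝ} (hA : IsSignedAdj A)
    {u v : Fin n} (huv : u ≠ v) (he : A u v = -1) :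
    netLap (deleteEdge A u v) = netLap A +
      Matrix.vecMulVec (fun i => if i = u then (1:ℝ) else if i = v then -1 else 0)
        (fun i => if i = u then (1:ℝ) else if i = v then -1 else 0) := by
  obtain ⟨hsym, hdiag, hent⟩ := hA
  have hvu : A v u = -1 := by rw [hsym.apply u v]; exact he
  have hvu' : v ≠ u := Ne.symm huv
  have hsum : ∀ (f : Fin n → ℝ) (t : Fin n),
      (∑ k, (if k = t then 0 else f k)) = (∑ k, f k) - f t := by
    intro f t
    have h1 : ∀ k : Fin n, (if k = t then 0 else f k) = f k - (if k = t then f k else 0) := by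
      intro k; by_cases h : k = t <;> simp [h]
    simp only [h1, Finset.sum_sub_distrib]
    rw [Finset.sum_ite_eq' Finset.univ t f]
    simp
  -- row sums of the deleted matrix
  have hrowsum : ∀ i, (∑ k, deleteEdge A u v i k)
      = (∑ k, A i k) + (if i = u then 1 else 0) + (if i = v then 1 else 0) := by
    intro i
    by_cases hiu : i = u
    · have hiv : i ≠ v := by rw [hiu]; exact huv
      have hrow : ∀ k, deleteEdge A u v i k = if k = v then 0 else A i k := by
        intro k
        by_cases hk : k = v <;> simp [deleteEdge, hiu, huv, hvu', hk]
      have hAiv : A i v = -1 := by rw [hiu]; exact he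
      rw [Finset.sum_congr rfl (fun k _ => hrow k), hsum (A i) v, hAiv, if_pos hiu,
        if_neg hiv]
      ring
    · by_cases hiv : i = v
      · have hrow : ∀ k, deleteEdge A u v i k = if k = u then 0 else A i k := by
          intro k
          by_cases hk : k = u <;> simp [deleteEdge, hiv, huv, hvu', hk]
        have hAiu : A i u = -1 := by rw [hiv]; exact hvu
        rw [Finset.sum_congr rfl (fun k _ => hrow k), hsum (A i) u, hAiu, if_neg hiu,
          if_pos hiv]
        ring
      · have hrow : ∀ k, deleteEdge A u v i k = A i k := by
          intro k; simp [deleteEdge, hiu, hiv]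
        rw [Finset.sum_congr rfl (fun k _ => hrow k), if_neg hiu, if_neg hiv]
        ring
  ext i j
  simp only [netLap, Matrix.add_apply, Matrix.sub_apply, Matrix.vecMulVec_apply]
  by_cases hij : i = j
  · rw [← hij, Matrix.diagonal_apply_eq, Matrix.diagonal_apply_eq, hrowsum i]
    have hAeq : deleteEdge A u v i i = A i i := by
      have : ¬ ((i = u ∧ i = v) ∨ (i = v ∧ i = u)) := by
        rintro (⟨h1, h2⟩ | ⟨h1, h2⟩) <;> exact huv (h1 ▸ h2 ▸ rfl)
      simp [deleteEdge, this]
    rw [hAeq]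
    by_cases hiu : i = u
    · have hiv : i ≠ v := by rw [hiu]; exact huv
      rw [if_pos hiu, if_neg hiv, if_pos hiu]
      ring
    · by_cases hiv : i = v
      · rw [if_neg hiu, if_pos hiv, if_neg hiu, if_pos hiv]
        ring
      · rw [if_neg hiu, if_neg hiv, if_neg hiu, if_neg hiv]
        ring
  · rw [Matrix.diagonal_apply_ne _ hij, Matrix.diagonal_apply_ne _ hij]
    by_cases hiu : i = u
    · have hiv : i ≠ v := by rw [hiu]; exact huv
      by_cases hjv : j = v
      · have hju : j ≠ u := by rw [hjv]; exact hvu'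
        have : deleteEdge A u v i j = 0 := by simp [deleteEdge, hiu, hjv]
        have hAij : A i j = -1 := by rw [hiu, hjv]; exact he
        rw [this, if_pos hiu, if_neg hju, if_pos hjv, hAij]
        ring
      · have hju : j ≠ u := fun h => hij (hiu.trans h.symm)
        have : deleteEdge A u v i j = A i j := by simp [deleteEdge, hiu, hiv, hju, hjv]
        rw [this, if_pos hiu, if_neg hju, if_neg hjv]
        ring
    · by_cases hiv : i = v
      · by_cases hju : j = u
        · have : deleteEdge A u v i j = 0 := by simp [deleteEdge, hiv, hju]
          have hAij : A i j = -1 := by rw [hiv, hju]; exact hvu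
          rw [this, if_neg hiu, if_pos hiv, if_pos hju, hAij]
          ring
        · have hjv : j ≠ v := fun h => hij (hiv.trans h.symm)
          have : deleteEdge A u v i j = A i j := by simp [deleteEdge, hiu, hiv, hju, hjv]
          rw [this, if_neg hiu, if_pos hiv, if_neg hju, if_neg hjv]
          ring
      · have : deleteEdge A u v i j = A i j := by simp [deleteEdge, hiu, hiv]
        rw [this, if_neg hiu, if_neg hiv]
        ring

theorem netLap_rayleigh_le {n : ℕ} {B : Matrix (Fin n) (Fin n) ℝ} (hB : IsSignedAdj B)
    (y : Fin n → ℝ) : y ⬝ᵥ (netLap B *ᵥ y) ≤ (n : ℝ) * (y ⬝ᵥ y) := by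
  obtain ⟨hsym, hdiag, hent⟩ := hB
  have h1 : ∀ i, (netLap B *ᵥ y) i = ∑ j, (B i j * y i - B i j * y j) := by
    intro i
    have hdsum : (∑ j, (Matrix.diagonal (fun i => ∑ k, B i k) i j) * y j)
        = ∑ j, B i j * y i := by
      have : ∀ j, (Matrix.diagonal (fun i => ∑ k, B i k) i j) * y j
          = if i = j then (∑ k, B i k) * y j else 0 := by
        intro j
        by_cases h : i = j <;> simp [Matrix.diagonal_apply, h]
      simp only [this]
      rw [Finset.sum_ite_eq Finset.univ i (fun j => (∑ k, B i k) * y j), if_pos (Finset.mem_univ i),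
        Finset.sum_mul]
    calc (netLap B *ᵥ y) i
        = (∑ j, (Matrix.diagonal (fun i => ∑ k, B i k) i j) * y j) - ∑ j, B i j * y j := by
          simp only [netLap, Matrix.mulVec, dotProduct, Matrix.sub_apply, sub_mul,
            Finset.sum_sub_distrib]
      _ = ∑ j, (B i j * y i - B i j * y j) := by
          rw [hdsum, Finset.sum_sub_distrib]
  have hQ : y ⬝ᵥ (netLap B *ᵥ y)
      = ∑ i, ∑ j, (B i j * (y i * y i) - B i j * (y i * y j)) := by
    simp only [dotProduct, h1, Finset.mul_sum]
    apply Finset.sum_congr rfl; intros i _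
    apply Finset.sum_congr rfl; intros j _
    ring
  have hT : (∑ i, ∑ j, B i j * (y i * y i)) = ∑ i, ∑ j, B i j * (y j * y j) := by
    rw [Finset.sum_comm]
    apply Finset.sum_congr rfl; intros i _
    apply Finset.sum_congr rfl; intros j _
    rw [hsym.apply i j]
  have h2Q : 2 * (y ⬝ᵥ (netLap B *ᵥ y)) = ∑ i, ∑ j, B i j * (y i - y j)^2 := by
    rw [hQ]
    have expand : ∀ i j : Fin n, B i j * (y i - y j)^2
        = (B i j * (y i * y i) - B i j * (y i * y j))
          + ((B i j * (y j * y j)) - B i j * (y i * y j)) := by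
      intros; ring
    simp only [expand, Finset.sum_add_distrib, Finset.sum_sub_distrib]
    rw [← hT]
    ring
  have hbound : (∑ i, ∑ j, B i j * (y i - y j)^2) ≤ ∑ i, ∑ j, (y i - y j)^2 := by
    apply Finset.sum_le_sum; intro i _
    apply Finset.sum_le_sum; intro j _
    have hle1 : B i j ≤ 1 := by rcases hent i j with h | h | h <;> rw [h] <;> norm_num
    exact mul_le_of_le_one_left (sq_nonneg _) hle1
  have hexp : (∑ i, ∑ j, (y i - y j)^2)
      = 2 * (n : ℝ) * (∑ i, y i * y i) - 2 * (∑ i, y i)^2 := by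
    have expand : ∀ i j : Fin n, (y i - y j)^2 = y i * y i + y j * y j - 2 * (y i * y j) := by
      intros; ring
    simp only [expand, Finset.sum_add_distrib, Finset.sum_sub_distrib]
    have e1 : (∑ _i : Fin n, ∑ _j : Fin n, y _i * y _i) = (n:ℝ) * ∑ i, y i * y i := by
      have : ∀ i : Fin n, (∑ _j : Fin n, y i * y i) = (n:ℝ) * (y i * y i) := by
        intro i
        rw [Finset.sum_const, Finset.card_univ, Fintype.card_fin, nsmul_eq_mul]
      simp only [this]
      rw [Finset.mul_sum]
    have e2 : (∑ _i : Fin n, ∑ j : Fin n, y j * y j) = (n:ℝ) * ∑ i, y i * y i := by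
      rw [Finset.sum_comm]
      exact e1
    have e3 : (∑ i : Fin n, ∑ j : Fin n, 2 * (y i * y j)) = 2 * (∑ i, y i) * (∑ i, y i) := by
      have hrow : ∀ i : Fin n, (∑ j : Fin n, 2 * (y i * y j)) = 2 * y i * (∑ j, y j) := by
        intro i
        rw [Finset.mul_sum]
        apply Finset.sum_congr rfl; intros; ring
      simp only [hrow]
      rw [← Finset.sum_mul, ← Finset.mul_sum]
    rw [e1, e2, e3]
    ring
  have hdot : y ⬝ᵥ y = ∑ i, y i * y i := rfl
  have hsq : (0:ℝ) ≤ (∑ i, y i)^2 := sq_nonneg _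
  rw [hdot]
  nlinarith [h2Q, hbound, hexp]

end Aux
open Matrix in
/-- deleting a negative edge, the ordered net-Laplacian spectra satisfy
alpha_p <= beta_p <= alpha_{p+1} for p = 1,...,m, with the convention alpha_{m+1} = m. -/
theorem stmt9 (m : ℕ) (A : Matrix (Fin m) (Fin m) ℝ) (hA : IsSignedAdj A)
    (u v : Fin m) (huv : u ≠ v) (he : A u v = -1)
    (α β : Fin m → ℝ)
    (hα : IsOrderedSpectrum (netLap A) α)
    (hβ : IsOrderedSpectrum (netLap (deleteEdge A u v)) β) :
    ∀ p : Fin m, α p ≤ β p ∧ β p ≤ (Fin.snoc α (m : ℝ) : Fin (m+1) → ℝ) p.succ := by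
  classical
  intro p
  set A' := deleteEdge A u v with hA'def
  have hA' : IsSignedAdj A' := deleteEdge_isSignedAdj hA u v
  have hN : (netLap A).IsHermitian := netLap_isHermitian hA.1
  have hN' : (netLap A').IsHermitian := netLap_isHermitian hA'.1
  obtain ⟨wa, hwa, hea⟩ := sg_exists_orthonormal_eigen hN hα.1 hα.2
  obtain ⟨wb, hwb, heb⟩ := sg_exists_orthonormal_eigen hN' hβ.1 hβ.2
  set x : Fin m → ℝ := fun i => if i = u then (1:ℝ) else if i = v then -1 else 0 with hxdef
  have hdiff : netLap A' = netLap A + Matrix.vecMulVec x x := netLap_deleteEdge hA huv he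
  have hquad : ∀ y : Fin m → ℝ,
      y ⬝ᵥ (netLap A' *ᵥ y) = y ⬝ᵥ (netLap A *ᵥ y) + (x ⬝ᵥ y)^2 := by
    intro y
    rw [hdiff, Matrix.add_mulVec, dotProduct_add]
    congr 1
    have hmv : Matrix.vecMulVec x x *ᵥ y = (x ⬝ᵥ y) • x := by
      funext i
      simp only [Matrix.mulVec, Matrix.vecMulVec_apply, dotProduct, Pi.smul_apply,
        smul_eq_mul, Finset.mul_sum]
      rw [Finset.sum_mul]
      apply Finset.sum_congr rfl; intros; ring
    rw [hmv, dotProduct_smul, smul_eq_mul, dotProduct_comm y x]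
    ring
  constructor
  · -- α p ≤ β p
    obtain ⟨g, hg0, ⟨i0, hi0⟩, hgc⟩ := sg_exists_test (m := m) (k := (p : ℕ) + 1) (r := (p : ℕ))
      p.2 (Nat.lt_succ_self _) wb (fun j => wa ⟨(j : ℕ), lt_trans j.2 p.2⟩)
    set y : Fin m → ℝ := ∑ i, g i • wb i with hydef
    obtain ⟨d, hd⟩ := sg_ortho_expand wa hwa y
    have hdval : ∀ j, d j = wa j ⬝ᵥ y := by
      intro j
      rw [hd, sg_w_dot_sum wa hwa d j]
    have hdlow : ∀ j : Fin m, (j : ℕ) < (p : ℕ) → d j = 0 := by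
      intro j hj
      have h1 := hgc ⟨(j : ℕ), hj⟩
      have h2 : wa ⟨(j : ℕ), lt_trans hj p.2⟩ = wa j := rfl
      rw [hdval j, ← h2]
      exact h1
    have hng : y ⬝ᵥ y = ∑ i, g i * g i := sg_sum_dot_sum wb hwb g g
    have hnd : y ⬝ᵥ y = ∑ i, d i * d i := by rw [hd]; exact sg_sum_dot_sum wa hwa d d
    have hpos : 0 < y ⬝ᵥ y := by
      rw [hng]
      apply Finset.sum_pos' (fun i _ => mul_self_nonneg (g i))
      exact ⟨i0, Finset.mem_univ i0, mul_self_pos.mpr hi0⟩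
    have hNy : y ⬝ᵥ (netLap A *ᵥ y) = ∑ j, α j * (d j * d j) := by
      rw [hd]; exact sg_rayleigh_eq wa hwa hea d
    have hN'y : y ⬝ᵥ (netLap A' *ᵥ y) = ∑ j, β j * (g j * g j) := sg_rayleigh_eq wb hwb heb g
    have hlower : α p * (y ⬝ᵥ y) ≤ y ⬝ᵥ (netLap A *ᵥ y) := by
      rw [hNy, hnd, Finset.mul_sum]
      apply Finset.sum_le_sum
      intro j _
      by_cases hj : (j : ℕ) < (p : ℕ)
      · rw [hdlow j hj]; simp
      · have hple : p ≤ j := by rw [Fin.le_def]; omega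
        exact mul_le_mul_of_nonneg_right (hα.1 hple) (mul_self_nonneg (d j))
    have hupper : y ⬝ᵥ (netLap A' *ᵥ y) ≤ β p * (y ⬝ᵥ y) := by
      rw [hN'y, hng, Finset.mul_sum]
      apply Finset.sum_le_sum
      intro j _
      by_cases hj : (p : ℕ) + 1 ≤ (j : ℕ)
      · rw [hg0 j hj]; simp
      · have hple : j ≤ p := by rw [Fin.le_def]; omega
        exact mul_le_mul_of_nonneg_right (hβ.1 hple) (mul_self_nonneg (g j))
    have hmid : y ⬝ᵥ (netLap A *ᵥ y) ≤ y ⬝ᵥ (netLap A' *ᵥ y) := by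
      rw [hquad y]
      nlinarith [sq_nonneg (x ⬝ᵥ y)]
    exact le_of_mul_le_mul_right (le_trans hlower (le_trans hmid hupper)) hpos
  · -- β p ≤ snoc
    by_cases hlast : (p : ℕ) + 1 < m
    · set q : Fin m := ⟨(p : ℕ) + 1, hlast⟩ with hqdef
      have hsnoc : (Fin.snoc α (m : ℝ) : Fin (m+1) → ℝ) p.succ = α q := by
        have hps : p.succ = Fin.castSucc q := rfl
        rw [hps, Fin.snoc_castSucc]
      rw [hsnoc]
      obtain ⟨g, hg0, ⟨i0, hi0⟩, hgc⟩ := sg_exists_test (m := m) (k := (p : ℕ) + 2)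
        (r := (p : ℕ) + 1) hlast (Nat.lt_succ_self _) wa
        (fun j => if hj : (j : ℕ) < (p : ℕ) then wb ⟨(j : ℕ), lt_trans hj p.2⟩ else x)
      set y : Fin m → ℝ := ∑ i, g i • wa i with hydef
      obtain ⟨d, hd⟩ := sg_ortho_expand wb hwb y
      have hdval : ∀ j, d j = wb j ⬝ᵥ y := by
        intro j
        rw [hd, sg_w_dot_sum wb hwb d j]
      have hdlow : ∀ j : Fin m, (j : ℕ) < (p : ℕ) → d j = 0 := by
        intro j hj
        have h1 := hgc ⟨(j : ℕ), lt_trans hj (Nat.lt_succ_self _)⟩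
        rw [dif_pos hj] at h1
        have h2 : wb ⟨(j : ℕ), lt_trans hj p.2⟩ = wb j := rfl
        rw [hdval j, ← h2]
        exact h1
      have hxy : x ⬝ᵥ y = 0 := by
        have h1 := hgc ⟨(p : ℕ), Nat.lt_succ_self _⟩
        rwa [dif_neg (lt_irrefl _)] at h1
      have hng : y ⬝ᵥ y = ∑ i, g i * g i := sg_sum_dot_sum wa hwa g g
      have hnd : y ⬝ᵥ y = ∑ i, d i * d i := by rw [hd]; exact sg_sum_dot_sum wb hwb d d
      have hpos : 0 < y ⬝ᵥ y := by
        rw [hng]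
        apply Finset.sum_pos' (fun i _ => mul_self_nonneg (g i))
        exact ⟨i0, Finset.mem_univ i0, mul_self_pos.mpr hi0⟩
      have hNy : y ⬝ᵥ (netLap A *ᵥ y) = ∑ j, α j * (g j * g j) := sg_rayleigh_eq wa hwa hea g
      have hN'y : y ⬝ᵥ (netLap A' *ᵥ y) = ∑ j, β j * (d j * d j) := by
        rw [hd]; exact sg_rayleigh_eq wb hwb heb d
      have hupper : y ⬝ᵥ (netLap A *ᵥ y) ≤ α q * (y ⬝ᵥ y) := by
        rw [hNy, hng, Finset.mul_sum]
        apply Finset.sum_le_sum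
        intro j _
        by_cases hj : (p : ℕ) + 2 ≤ (j : ℕ)
        · rw [hg0 j hj]; simp
        · have hple : j ≤ q := by rw [Fin.le_def]; simp [hqdef]; omega
          exact mul_le_mul_of_nonneg_right (hα.1 hple) (mul_self_nonneg (g j))
      have hlower : β p * (y ⬝ᵥ y) ≤ y ⬝ᵥ (netLap A' *ᵥ y) := by
        rw [hN'y, hnd, Finset.mul_sum]
        apply Finset.sum_le_sum
        intro j _
        by_cases hj : (j : ℕ) < (p : ℕ)
        · rw [hdlow j hj]; simp
        · have hple : p ≤ j := by rw [Fin.le_def]; omega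
          exact mul_le_mul_of_nonneg_right (hβ.1 hple) (mul_self_nonneg (d j))
      have hmid : y ⬝ᵥ (netLap A' *ᵥ y) = y ⬝ᵥ (netLap A *ᵥ y) := by
        rw [hquad y, hxy]
        ring
      exact le_of_mul_le_mul_right (le_trans hlower (hmid.le.trans hupper)) hpos
    · have hpm : (p : ℕ) + 1 = m := by omega
      have hsnoc : (Fin.snoc α (m : ℝ) : Fin (m+1) → ℝ) p.succ = (m : ℝ) := by
        have hps : p.succ = Fin.last m := by
          apply Fin.ext
          simp [hpm]
        rw [hps, Fin.snoc_last]
      rw [hsnoc]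
      set y : Fin m → ℝ := wb p with hydef
      have hnorm : y ⬝ᵥ y = 1 := by
        have := hwb p p
        rwa [if_pos rfl] at this
      have hval : y ⬝ᵥ (netLap A' *ᵥ y) = β p := by
        rw [heb p, dotProduct_smul, smul_eq_mul, hnorm, mul_one]
      have hble := netLap_rayleigh_le hA' y
      rw [hval, hnorm, mul_one] at hble
      exact hble
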